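/- arXiv:2109.01785 — 2 statements merged into one kernel-verified Lean document; each statement's English description precedes it below -/
import Mathlib

section
/- Perturbation lemma (real positive-definite version): Let B ∈ ℝ^{n×n} be symmetric positive semidefinite, u ∈ ℝⁿ, γ ≥ 0, and z > 0. Then |(1/n) tr((B + γ u uᵀ + z I)⁻¹) - (1/n) tr((B + z I)⁻¹)| ≤ 1/(n z). -/
open Matrix


variable {n : ℕ}

lemma aux_vmv_mulVec (a b x : Fin n → ℝ) : vecMulVec a b *ᵥ x = (b ⬝ᵥ x) • a := by
  ext i
  simp [mulVec, vecMulVec_apply, dotProduct, Finset.sum_mul, Finset.mul_sum,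
    mul_comm, mul_assoc, mul_left_comm]

lemma aux_mul_vmv (M : Matrix (Fin n) (Fin n) ℝ) (a b : Fin n → ℝ) :
    M * vecMulVec a b = vecMulVec (M *ᵥ a) b := by
  ext i j
  simp [mul_apply, vecMulVec_apply, mulVec, dotProduct, Finset.sum_mul, Finset.mul_sum,
    mul_comm, mul_assoc, mul_left_comm]

lemma aux_trace_vmv (a b : Fin n → ℝ) : (vecMulVec a b).trace = a ⬝ᵥ b := by
  simp [Matrix.trace, vecMulVec_apply, dotProduct, Matrix.diag]

lemma aux_star_eq (x : Fin n → ℝ) : star x = x := by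
  funext i; simp

lemma aux_vmv_psd (u : Fin n → ℝ) : (vecMulVec u u).PosSemidef := by
  rw [posSemidef_iff_dotProduct_mulVec]
  constructor
  · ext i j
    simp [conjTranspose_apply, vecMulVec_apply, mul_comm]
  · intro x
    rw [aux_vmv_mulVec, dotProduct_smul, aux_star_eq, smul_eq_mul, dotProduct_comm]
    exact mul_self_nonneg _

lemma aux_smul_psd {M : Matrix (Fin n) (Fin n) ℝ} (hM : M.PosSemidef) {c : ℝ} (hc : 0 ≤ c) :
    (c • M).PosSemidef := by
  rw [posSemidef_iff_dotProduct_mulVec]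
  constructor
  · show _ = _
    have h1 : Mᵀ = M := by simpa using hM.1.eq
    simp [conjTranspose_smul, h1]
  · intro x
    rw [smul_mulVec, dotProduct_smul, smul_eq_mul]
    exact mul_nonneg hc (hM.dotProduct_mulVec_nonneg x)

lemma aux_posdef_add_smul_one (D : Matrix (Fin n) (Fin n) ℝ) (hD : D.PosSemidef)
    {z : ℝ} (hz : 0 < z) : (D + z • (1 : Matrix (Fin n) (Fin n) ℝ)).PosDef := by
  rw [posDef_iff_dotProduct_mulVec]
  constructor
  · show _ = _
    have h1 : Dᵀ = D := by simpa using hD.1.eq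
    simp [conjTranspose_add, conjTranspose_smul, h1]
  · intro x hx
    have h1 : (D + z • (1 : Matrix (Fin n) (Fin n) ℝ)) *ᵥ x = D *ᵥ x + z • x := by
      simp [add_mulVec, smul_mulVec]
    rw [h1, dotProduct_add, dotProduct_smul, smul_eq_mul]
    have h2 := hD.dotProduct_mulVec_nonneg x
    have h3 : 0 < star x ⬝ᵥ x := dotProduct_star_self_pos_iff.2 hx
    have h4 := mul_pos hz h3
    linarith

/-- Perturbation lemma: a rank-one perturbation changes the normalized trace of
the resolvent by at most `1/(n z)`. -/
theorem perturbation_lemma {n : ℕ}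
    (B : Matrix (Fin n) (Fin n) ℝ) (u : Fin n → ℝ) (γ z : ℝ)
    (hB : B.PosSemidef) (hγ : 0 ≤ γ) (hz : 0 < z) :
    |(1 / n) * ((B + γ • vecMulVec u u + z • (1 : Matrix (Fin n) (Fin n) ℝ))⁻¹).trace -
      (1 / n) * ((B + z • (1 : Matrix (Fin n) (Fin n) ℝ))⁻¹).trace| ≤ 1 / (n * z) := by
  set A : Matrix (Fin n) (Fin n) ℝ := B + γ • vecMulVec u u + z • 1 with hAdef
  set C : Matrix (Fin n) (Fin n) ℝ := B + z • 1 with hCdef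
  have hC : C.PosDef := aux_posdef_add_smul_one B hB hz
  have hvmv : (γ • vecMulVec u u).PosSemidef := aux_smul_psd (aux_vmv_psd u) hγ
  have hA : A.PosDef := aux_posdef_add_smul_one _ (hB.add hvmv) hz
  have hCdet : IsUnit C.det := hC.det_pos.ne'.isUnit
  have hAdet : IsUnit A.det := hA.det_pos.ne'.isUnit
  set w : Fin n → ℝ := C⁻¹ *ᵥ u with hw
  have hCw : C *ᵥ w = u := by
    rw [hw, mulVec_mulVec, mul_nonsing_inv _ hCdet, one_mulVec]
  set s : ℝ := u ⬝ᵥ w with hs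
  set t : ℝ := w ⬝ᵥ w with ht
  have hs0 : 0 ≤ s := by
    have h := (hC.inv.posSemidef).dotProduct_mulVec_nonneg u
    rwa [aux_star_eq] at h
  have ht0 : 0 ≤ t := by
    have h := dotProduct_star_self_nonneg w
    rwa [aux_star_eq] at h
  have hBw : 0 ≤ w ⬝ᵥ B *ᵥ w := by
    have h := hB.dotProduct_mulVec_nonneg w
    rwa [aux_star_eq] at h
  have hst : z * t ≤ s := by
    have h1 : s = w ⬝ᵥ (C *ᵥ w) := by rw [hs, ← hCw, dotProduct_comm]
    have h2 : w ⬝ᵥ (C *ᵥ w) = w ⬝ᵥ B *ᵥ w + z * t := by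
      rw [hCdef, add_mulVec, dotProduct_add, smul_mulVec, one_mulVec,
        dotProduct_smul, smul_eq_mul, ht]
    linarith
  have h1γs : 0 < 1 + γ * s := by nlinarith
  have hAC : A = C + γ • vecMulVec u u := by rw [hAdef, hCdef]; abel
  have hAw : A *ᵥ w = (1 + γ * s) • u := by
    rw [hAC, add_mulVec, hCw, smul_mulVec, aux_vmv_mulVec, ← hs, smul_smul]
    rw [add_smul, one_smul]
  have hAinvu : A⁻¹ *ᵥ u = (1 + γ * s)⁻¹ • w := by
    have h : w = (1 + γ * s) • (A⁻¹ *ᵥ u) := by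
      have h0 : A⁻¹ *ᵥ (A *ᵥ w) = A⁻¹ *ᵥ ((1 + γ * s) • u) := by rw [hAw]
      rwa [mulVec_mulVec, nonsing_inv_mul _ hAdet, one_mulVec, mulVec_smul] at h0
    rw [h, smul_smul, inv_mul_cancel₀ h1γs.ne', one_smul]
  have hkey : A⁻¹ - C⁻¹ = (-γ) • (A⁻¹ * vecMulVec u u * C⁻¹) := by
    have h1 : A⁻¹ * (C - A) * C⁻¹ = A⁻¹ - C⁻¹ := by
      rw [Matrix.mul_sub, Matrix.sub_mul, Matrix.mul_assoc, mul_nonsing_inv _ hCdet,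
        Matrix.mul_one, nonsing_inv_mul _ hAdet, Matrix.one_mul]
    have h2 : C - A = (-γ) • vecMulVec u u := by
      rw [hAC, neg_smul]; abel
    rw [← h1, h2, Matrix.mul_smul, Matrix.smul_mul]
  have hsym : C⁻¹ᵀ = C⁻¹ := by simpa using hC.inv.isHermitian.eq
  have h4 : (C⁻¹ *ᵥ w) ⬝ᵥ u = t := by
    rw [dotProduct_comm, dotProduct_mulVec, ← mulVec_transpose, hsym, ← hw, ht]
  have h3 : (A⁻¹ * vecMulVec u u * C⁻¹).trace = (1 + γ * s)⁻¹ * t := by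
    rw [trace_mul_comm, ← Matrix.mul_assoc, aux_mul_vmv, aux_trace_vmv,
      ← mulVec_mulVec, hAinvu, mulVec_smul, smul_dotProduct, h4, smul_eq_mul]
  have htr : A⁻¹.trace - C⁻¹.trace = -(γ * ((1 + γ * s)⁻¹ * t)) := by
    have := congrArg Matrix.trace hkey
    rw [trace_sub, trace_smul, h3, smul_eq_mul] at this
    rw [this]; ring
  rw [← mul_sub, abs_mul, htr, abs_neg]
  have hnn : 0 ≤ γ * ((1 + γ * s)⁻¹ * t) :=
    mul_nonneg hγ (mul_nonneg (inv_nonneg.2 h1γs.le) ht0)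
  rw [abs_of_nonneg hnn, abs_of_nonneg (by positivity : (0:ℝ) ≤ 1 / n)]
  have hb : γ * ((1 + γ * s)⁻¹ * t) ≤ 1 / z := by
    have h5 : γ * ((1 + γ * s)⁻¹ * t) = (γ * t) / (1 + γ * s) := by
      rw [div_eq_mul_inv]; ring
    rw [h5, div_le_div_iff₀ h1γs hz]
    nlinarith
  have hrw : (1 : ℝ) / (n * z) = (1 / n) * (1 / z) := by
    rw [one_div, mul_inv, one_div, one_div]
  rw [hrw]
  exact mul_le_mul_of_nonneg_left hb (by positivity)
end

section
/- The fixed-point system δ₁ = (1/c)·ν(1+δ₁)/(ν + z(1+δ₁)(1+δ₂)), δ₂ = ν(1+δ₂)/(ν + z(1+δ₁)(1+δ₂)) with parameters ν > 0, c > 0, z > 0 admits a unique pair of nonnegative solutions (δ₁, δ₂), provided z is large enough (e.g., z > ν(1 + 1/c)). -/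
lemma root_unique_aux (ν c z s t : ℝ) (hν : 0 < ν) (hc : 0 < c) (hz : 0 < z)
    (hs2 : s < 1) (hs3 : s < c)
    (ht1 : 0 < t) (ht2 : t < 1) (ht3 : t < c)
    (hgs : ν*(1-s)^2*(c-s) = z*c*s) (hgt : ν*(1-t)^2*(c-t) = z*c*t)
    (hlt : s < t) : False := by
  have h1 : (1-t)^2 ≤ (1-s)^2 :=
    pow_le_pow_left₀ (by linarith) (by linarith) 2
  have h2 : (1-t)^2*(c-t) ≤ (1-s)^2*(c-s) :=
    mul_le_mul h1 (by linarith) (by linarith) (by positivity)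
  nlinarith [mul_le_mul_of_nonneg_left h2 hν.le,
    mul_pos (mul_pos hz hc) (sub_pos.mpr hlt)]

lemma root_unique (ν c z s t : ℝ) (hν : 0 < ν) (hc : 0 < c) (hz : 0 < z)
    (hs1 : 0 < s) (hs2 : s < 1) (hs3 : s < c)
    (ht1 : 0 < t) (ht2 : t < 1) (ht3 : t < c)
    (hgs : ν*(1-s)^2*(c-s) = z*c*s) (hgt : ν*(1-t)^2*(c-t) = z*c*t) : s = t := by
  rcases lt_trichotomy s t with h | h | h
  · exact absurd (root_unique_aux ν c z s t hν hc hz hs2 hs3 ht1 ht2 ht3 hgs hgt h) not_false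
  · exact h
  · exact absurd (root_unique_aux ν c z t s hν hc hz ht2 ht3 hs1 hs2 hs3 hgt hgs h) not_false

/-- Existence and uniqueness of nonnegative solutions to the fixed point system
for `z` large enough. -/
theorem fixed_point_system_unique (ν c z : ℝ)
    (hν : 0 < ν) (hc : 0 < c) (hz : 0 < z) (hlarge : z > ν * (1 + 1 / c)) :
    ∃! d : ℝ × ℝ, 0 ≤ d.1 ∧ 0 ≤ d.2 ∧
      d.1 = (1 / c) * (ν * (1 + d.1) / (ν + z * (1 + d.1) * (1 + d.2))) ∧
      d.2 = ν * (1 + d.2) / (ν + z * (1 + d.1) * (1 + d.2)) := by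
  -- existence of the root t
  have hm0 : 0 < min 1 c := lt_min one_pos hc
  have hcont : ContinuousOn (fun t => ν*(1-t)^2*(c-t) - z*c*t) (Set.Icc 0 (min 1 c)) :=
    (by continuity : Continuous fun t => ν*(1-t)^2*(c-t) - z*c*t).continuousOn
  have hmem : (0:ℝ) ∈ Set.Ioo
      (ν*(1-(min 1 c))^2*(c-(min 1 c)) - z*c*(min 1 c)) (ν*(1-(0:ℝ))^2*(c-0) - z*c*0) := by
    constructor
    · rcases min_cases 1 c with ⟨h1, _⟩ | ⟨h1, _⟩ <;> rw [h1] <;>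
        nlinarith [mul_pos hz (mul_pos hc hc), mul_pos hz hc, mul_pos hν hc]
    · nlinarith [mul_pos hν hc]
  obtain ⟨t, htmem, hgt'⟩ := intermediate_value_Ioo' hm0.le hcont hmem
  have ht1 : 0 < t := htmem.1
  have ht2 : t < 1 := lt_of_lt_of_le htmem.2 (min_le_left _ _)
  have ht3 : t < c := lt_of_lt_of_le htmem.2 (min_le_right _ _)
  have hgt : ν*(1-t)^2*(c-t) = z*c*t := by
    have : ν*(1-t)^2*(c-t) - z*c*t = 0 := hgt'
    linarith
  have hct : (0:ℝ) < c - t := by linarith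
  have h1t : (0:ℝ) < 1 - t := by linarith
  -- the witness
  refine ⟨(t/(c-t), t/(1-t)), ⟨?_, ?_, ?_, ?_⟩, ?_⟩
  · exact le_of_lt (div_pos ht1 hct)
  · exact le_of_lt (div_pos ht1 h1t)
  · -- first equation
    have hD : ν + z * (1 + t/(c-t)) * (1 + t/(1-t)) = ν / t := by
      field_simp
      ring_nf
      nlinarith [hgt]
    rw [hD]
    field_simp
    ring
  · have hD : ν + z * (1 + t/(c-t)) * (1 + t/(1-t)) = ν / t := by
      field_simp
      ring_nf
      nlinarith [hgt]
    rw [hD]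
    field_simp
    ring
  · -- uniqueness
    rintro ⟨a, b⟩ ⟨ha, hb, e1, e2⟩
    simp only at ha hb e1 e2 ⊢
    have ha1 : (0:ℝ) < 1 + a := by linarith
    have hb1 : (0:ℝ) < 1 + b := by linarith
    have hD : 0 < ν + z * (1 + a) * (1 + b) := by positivity
    have e2' : b * (ν + z * (1 + a) * (1 + b)) = ν * (1 + b) := by
      rw [eq_div_iff hD.ne'] at e2; exact e2
    have e1' : a * c * (ν + z * (1 + a) * (1 + b)) = ν * (1 + a) := by
      rw [div_mul_eq_mul_div, one_mul, div_div, eq_div_iff (by positivity)] at e1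
      linarith [e1]
    set s := ν / (ν + z * (1 + a) * (1 + b)) with hs
    have hs1 : 0 < s := div_pos hν hD
    have key1 : z * (1 + a) * (1 + b) * b = ν := by linarith [e2']; 
    have hDalt : ν + z * (1 + a) * (1 + b) = z * (1 + a) * (1 + b)^2 := by
      linear_combination -key1
    have h1s : 1 - s = 1 / (1 + b) := by
      rw [hs]; field_simp; linear_combination e2'
    have hcs : c - s = c / (1 + a) := by
      rw [hs]; field_simp; linear_combination e1'
    have hs2 : s < 1 := by
      have : (0:ℝ) < 1 / (1 + b) := by positivity
      linarith [h1s]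
    have hs3 : s < c := by
      have : (0:ℝ) < c / (1 + a) := by positivity
      linarith [hcs]
    have hgs : ν*(1-s)^2*(c-s) = z*c*s := by
      rw [h1s, hcs, hs]
      field_simp
      linear_combination hDalt
    have hst : s = t := root_unique ν c z s t hν hc hz hs1 hs2 hs3 ht1 ht2 ht3 hgs hgt
    have hA : a = s / (c - s) := by
      rw [hcs]; rw [div_div_eq_mul_div, eq_div_iff hc.ne']
      rw [hs]; field_simp; linear_combination e1'
    have hB : b = s / (1 - s) := by
      rw [h1s]; rw [div_div_eq_mul_div, div_one]
      rw [hs]; field_simp; linear_combination e2'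
    rw [Prod.mk.injEq]
    constructor
    · rw [hA, hst]
    · rw [hB, hst]
end
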